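/- Conservation of the spectral L² norm for the truncated vorticity equation: let K ⊂ ℤ² \ {0} be a finite set symmetric under k ↦ −k, and let ω_k(t) ∈ ℂ solve dω_k/dt = Σ_{p+q=k, p,q ∈ K} (p×q)_z · ω_q ψ_p with ψ_k = −ω_k/|k|², subject to the reality condition ω_{−k} = ω_k*. Then d/dt Σ_{k∈K} |ω_k|² = 0. -/

import Mathlib

/-- Key cancellation: the nonlinear term sums to zero. -/
lemma key_cancel (K : Finset (ℤ × ℤ)) (hKsymm : ∀ k ∈ K, -k ∈ K) (w : ℤ × ℤ → ℂ) :
    ∑ k ∈ K, w (-k) *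
      (∑ p ∈ K, ∑ q ∈ K,
        if p + q = k then
          ((p.1 * q.2 - p.2 * q.1 : ℤ) : ℂ) * w q *
            (-(w p) / ((p.1 ^ 2 + p.2 ^ 2 : ℤ) : ℂ))
        else 0) = 0 := by
  simp_rw [Finset.mul_sum]
  rw [Finset.sum_comm]
  refine Finset.sum_eq_zero (fun p hp => ?_)
  rw [← Finset.sum_product']
  set f : (ℤ × ℤ) × (ℤ × ℤ) → ℂ := fun x =>
    w (-x.1) *
      (if p + x.2 = x.1 then
        ((p.1 * x.2.2 - p.2 * x.2.1 : ℤ) : ℂ) * w x.2 *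
          (-(w p) / ((p.1 ^ 2 + p.2 ^ 2 : ℤ) : ℂ))
      else 0) with hf
  show ∑ x ∈ K ×ˢ K, f x = 0
  refine Finset.sum_involution (fun x _ => (-x.2, -x.1)) ?_ ?_ ?_ ?_
  · intro x hx
    by_cases h1 : p + x.2 = x.1
    · obtain ⟨k, q⟩ := x
      simp only at h1
      subst h1
      have h2 : p + -(p + q) = -q := by abel
      simp only [hf, if_pos rfl, if_pos h2, Prod.fst_neg, Prod.snd_neg, Prod.fst_add,
        Prod.snd_add, neg_neg]
      push_cast
      ring
    · have h2 : ¬ (p + -x.1 = -x.2) := by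
        intro h
        apply h1
        have : p + x.2 = x.1 := by
          have := congrArg (fun z => z + x.1 + x.2) h
          simpa [add_assoc, add_comm, add_left_comm] using this
        exact this
      simp [hf, h1, h2]
  · intro x hx hfx hgx
    apply hfx
    have h2 : x.2 = -x.1 := by
      have := congrArg Prod.fst hgx
      simp only at this
      rw [← this, neg_neg]
    by_cases hc : p + x.2 = x.1
    · have hp2 : p = x.1 + x.1 := by
        have := hc
        rw [h2] at this
        have := congrArg (fun z => z + x.1) this
        simpa [add_assoc] using this
      have hz : (p.1 * x.2.2 - p.2 * x.2.1 : ℤ) = 0 := by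
        rw [hp2, h2]
        simp [Prod.fst_add, Prod.snd_add, Prod.fst_neg, Prod.snd_neg]
        ring
      simp only [hf, if_pos hc, mul_eq_zero]
      refine Or.inr (Or.inl (Or.inl ?_))
      exact_mod_cast hz
    · simp [hf, hc]
  · intro x hx
    have := Finset.mem_product.mp hx
    exact Finset.mem_product.mpr ⟨hKsymm _ this.2, hKsymm _ this.1⟩
  · intro x hx
    simp

/-- Conservation of the spectral L² norm for the Fourier–Galerkin truncated 2D vorticity
equation: for a finite set `K ⊂ ℤ² \ {0}` symmetric under `k ↦ −k`, if the modes `ω k`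
solve `dω_k/dt = Σ_{p+q=k, p,q∈K} (p×q)_z ω_q ψ_p` with `ψ_p = −ω_p/|p|²` and satisfy the
reality condition `ω_{−k} = ω_k*`, then `d/dt Σ_{k∈K} |ω_k|² = 0`. -/
theorem stmt14
    (K : Finset (ℤ × ℤ)) (hK0 : ((0 : ℤ), (0 : ℤ)) ∉ K)
    (hKsymm : ∀ k ∈ K, -k ∈ K)
    (ω : ℝ → ℤ × ℤ → ℂ)
    (hdiff : ∀ k : ℤ × ℤ, Differentiable ℝ (fun t => ω t k))
    (hreal : ∀ t : ℝ, ∀ k ∈ K, ω t (-k) = (starRingEnd ℂ) (ω t k))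
    (hode : ∀ t : ℝ, ∀ k ∈ K,
      deriv (fun s => ω s k) t
        = ∑ p ∈ K, ∑ q ∈ K,
            if p + q = k then
              ((p.1 * q.2 - p.2 * q.1 : ℤ) : ℂ) * ω t q *
                (-(ω t p) / ((p.1 ^ 2 + p.2 ^ 2 : ℤ) : ℂ))
            else 0) :
    ∀ t : ℝ, deriv (fun s => ∑ k ∈ K, ‖ω s k‖ ^ 2) t = 0 := by
  intro t
  set d : ℤ × ℤ → ℂ := fun k => deriv (fun s => ω s k) t with hd
  -- the complexified function and its derivative
  have hg : HasDerivAt (fun s => ∑ k ∈ K, ω s k * ω s (-k))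
      (∑ k ∈ K, (d k * ω t (-k) + ω t k * d (-k))) t := by
    refine HasDerivAt.fun_sum (fun k _ => ?_)
    exact ((hdiff k t).hasDerivAt).mul ((hdiff (-k) t).hasDerivAt)
  have heq : (fun s => ∑ k ∈ K, ‖ω s k‖ ^ 2)
      = fun s => (∑ k ∈ K, ω s k * ω s (-k)).re := by
    funext s
    rw [Complex.re_sum]
    refine Finset.sum_congr rfl (fun k hk => ?_)
    rw [hreal s k hk, Complex.mul_conj, Complex.ofReal_re, Complex.normSq_eq_norm_sq]
  have hre : HasDerivAt (fun s => ∑ k ∈ K, ‖ω s k‖ ^ 2)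
      ((∑ k ∈ K, (d k * ω t (-k) + ω t k * d (-k))).re) t := by
    rw [heq]
    exact (Complex.reCLM.hasFDerivAt.comp_hasDerivAt t hg)
  rw [hre.deriv]
  -- show the complex sum is zero
  have hzero : (∑ k ∈ K, (d k * ω t (-k) + ω t k * d (-k))) = 0 := by
    rw [Finset.sum_add_distrib]
    have hswap : ∑ k ∈ K, ω t k * d (-k) = ∑ k ∈ K, ω t (-k) * d k := by
      refine Finset.sum_nbij' (fun k => -k) (fun k => -k) ?_ ?_ ?_ ?_ ?_
      · intro k hk; exact hKsymm _ hk
      · intro k hk; exact hKsymm _ hk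
      · intro k _; simp
      · intro k _; simp
      · intro k _; simp
    rw [hswap]
    have hS : ∑ k ∈ K, ω t (-k) * d k = 0 := by
      have : ∀ k ∈ K, ω t (-k) * d k
          = ω t (-k) * (∑ p ∈ K, ∑ q ∈ K,
              if p + q = k then
                ((p.1 * q.2 - p.2 * q.1 : ℤ) : ℂ) * ω t q *
                  (-(ω t p) / ((p.1 ^ 2 + p.2 ^ 2 : ℤ) : ℂ))
              else 0) := by
        intro k hk
        rw [hd]
        simp only
        rw [hode t k hk]
      rw [Finset.sum_congr rfl this]
      exact key_cancel K hKsymm (ω t)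
    have hS' : ∑ k ∈ K, d k * ω t (-k) = 0 := by
      rw [← hS]
      exact Finset.sum_congr rfl (fun k _ => mul_comm _ _)
    rw [hS, hS', add_zero]
  rw [hzero]
  simp
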